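/- Let F⊂ℝ be compact with Lebesgue measure zero and associated fractal string (l_j), the non-increasing enumeration of the lengths of bounded complementary intervals, and let D∈(0,1). If there exist constants 0<c₁<c₂ such that c₁ ≤ l_j j^{1/D} ≤ c₂ for all large j, then 0 < 𝓢̲^D(F) ≤ 𝓢̄^D(F) < ∞. -/

import Mathlib

open Filter Set Topology MeasureTheory Metric ENNReal

/-- `κ_t = π^{t/2} / Γ(1 + t/2)`. -/
noncomputable def kappa (t : ℝ) : ℝ := Real.pi ^ (t / 2) / Real.Gamma (1 + t / 2)

/-- `(l_j)` is the fractal string of the compact set `F ⊂ ℝ`: a non-increasing sequence of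
positive lengths of the (pairwise disjoint) bounded complementary open intervals of `F`. -/
def IsFractalString (F : Set ℝ) (l : ℕ → ℝ) : Prop :=
  Antitone l ∧ (∀ j, 0 < l j) ∧
  ∃ a b : ℕ → ℝ,
    Pairwise (Function.onFun Disjoint fun j => Set.Ioo (a j) (b j)) ∧
    (∀ j, a j < b j ∧ b j - a j = l j) ∧
    (convexHull ℝ F) \ F = ⋃ j, Set.Ioo (a j) (b j)

/-- Lower S-content of `F ⊂ ℝ`: `liminf_{r→0} 𝓗⁰(∂F_r)/((1−D)κ_{1−D} r^{−D})`. -/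
noncomputable def lowerSContent (F : Set ℝ) (D : ℝ) : ℝ≥0∞ :=
  Filter.liminf
    (fun r : ℝ => μH[(0 : ℝ)] (frontier (cthickening r F)) /
      ENNReal.ofReal ((1 - D) * kappa (1 - D) * r ^ (-D)))
    (𝓝[>] (0 : ℝ))

/-- Upper S-content of `F ⊂ ℝ`. -/
noncomputable def upperSContent (F : Set ℝ) (D : ℝ) : ℝ≥0∞ :=
  Filter.limsup
    (fun r : ℝ => μH[(0 : ℝ)] (frontier (cthickening r F)) /
      ENNReal.ofReal ((1 - D) * kappa (1 - D) * r ^ (-D)))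
    (𝓝[>] (0 : ℝ))

lemma aux_le_infDist {s : Set ℝ} (hs : s.Nonempty) {x b : ℝ} (h : ∀ y ∈ s, b ≤ dist x y) :
    b ≤ Metric.infDist x s := by
  by_contra hlt
  push_neg at hlt
  obtain ⟨y, hy, hxy⟩ := (Metric.infDist_lt_iff hs).1 hlt
  exact absurd hxy (not_lt.2 (h y hy))

lemma aux_mem_cthickening_iff {s : Set ℝ} (hs : s.Nonempty) {r x : ℝ} (hr : 0 ≤ r) :
    x ∈ Metric.cthickening r s ↔ Metric.infDist x s ≤ r := by
  rw [Metric.mem_cthickening_iff, Metric.infDist,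
    ← ENNReal.le_ofReal_iff_toReal_le (Metric.infEdist_ne_top hs) hr]

lemma aux_hausdorff0_finset (s : Finset ℝ) : μH[(0:ℝ)] (↑s : Set ℝ) = s.card := by
  classical
  induction s using Finset.induction_on with
  | empty => simp
  | @insert x s hx ih =>
    rw [Finset.coe_insert, Set.insert_eq]
    rw [measure_union (Set.disjoint_singleton_left.2 (by exact_mod_cast hx)) s.measurableSet]
    rw [MeasureTheory.Measure.hausdorffMeasure_zero_singleton, ih,
      Finset.card_insert_of_notMem hx]
    push_cast
    rw [add_comm]

set_option maxHeartbeats 1000000 in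
theorem scontent_two_sided_of_string_bounds (F : Set ℝ) (hF : IsCompact F)
    (hF0 : volume F = 0) (l : ℕ → ℝ) (hl : IsFractalString F l)
    (D : ℝ) (hD : D ∈ Set.Ioo (0 : ℝ) 1)
    (hstring : ∃ c₁ c₂ : ℝ, 0 < c₁ ∧ c₁ < c₂ ∧
      ∀ᶠ j : ℕ in Filter.atTop, c₁ ≤ l j * (j : ℝ) ^ (1 / D) ∧ l j * (j : ℝ) ^ (1 / D) ≤ c₂) :
    0 < lowerSContent F D ∧ upperSContent F D < ⊤ := by
  classical
  obtain ⟨hD0, hD1⟩ := hD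
  obtain ⟨hlanti, hlpos, a, b, hdisj, hab, hcompl⟩ := hl
  obtain ⟨c₁, c₂, hc₁, hc₁₂, hev⟩ := hstring
  have hc₂ : 0 < c₂ := hc₁.trans hc₁₂
  obtain ⟨N₀, hN₀⟩ := Filter.eventually_atTop.1 hev
  set N := max N₀ 1 with hNdef
  have hN1 : 1 ≤ N := le_max_right _ _
  have hNbound : ∀ j, N ≤ j → c₁ ≤ l j * (j:ℝ) ^ (1/D) ∧ l j * (j:ℝ) ^ (1/D) ≤ c₂ :=
    fun j hj => hN₀ j (le_trans (le_max_left _ _) hj)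
  -- F is nonempty
  have hFne : F.Nonempty := by
    rcases Set.eq_empty_or_nonempty F with hFe | h
    · exfalso
      obtain ⟨x, hx⟩ := Set.nonempty_Ioo.2 (hab 0).1
      have hsub : Set.Ioo (a 0) (b 0) ⊆ (convexHull ℝ F) \ F := by
        rw [hcompl]; exact Set.subset_iUnion (fun j => Set.Ioo (a j) (b j)) 0
      have := hsub hx
      rw [hFe] at this
      simp [convexHull_empty] at this
    · exact h
  set m := sInf F with hmdef
  set M := sSup F with hMdef
  have hm : m ∈ F := hF.sInf_mem hFne
  have hM : M ∈ F := hF.sSup_mem hFne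
  have hmM : m ≤ M := csInf_le_csSup hFne hF.bddBelow hF.bddAbove
  have hFsub : F ⊆ Set.Icc m M := fun x hx => ⟨csInf_le hF.bddBelow hx, le_csSup hF.bddAbove hx⟩
  have hhull : convexHull ℝ F = Set.Icc m M := by
    apply Set.Subset.antisymm
    · exact convexHull_min hFsub (convex_Icc m M)
    · rw [← segment_eq_Icc hmM]
      exact (convex_convexHull ℝ F).segment_subset (subset_convexHull ℝ F hm)
        (subset_convexHull ℝ F hM)
  rw [hhull] at hcompl
  -- basic facts about the intervals
  have hIooF : ∀ j, ∀ y ∈ F, y ∉ Set.Ioo (a j) (b j) := by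
    intro j y hy hmem
    have : y ∈ Set.Icc m M \ F := by
      rw [hcompl]; exact Set.mem_iUnion.2 ⟨j, hmem⟩
    exact this.2 hy
  have hsep : ∀ j, ∀ y ∈ F, y ≤ a j ∨ b j ≤ y := by
    intro j y hy
    by_contra h
    push_neg at h
    exact hIooF j y hy ⟨h.1, h.2⟩
  have hIoosub : ∀ j, Set.Ioo (a j) (b j) ⊆ Set.Icc m M := by
    intro j x hx
    have : x ∈ Set.Icc m M \ F := by
      rw [hcompl]; exact Set.mem_iUnion.2 ⟨j, hx⟩
    exact this.1
  have habIcc : ∀ j, a j ∈ Set.Icc m M ∧ b j ∈ Set.Icc m M := by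
    intro j
    have h1 : Set.Icc (a j) (b j) ⊆ Set.Icc m M := by
      rw [← closure_Ioo (ne_of_lt (hab j).1)]
      exact closure_minimal (hIoosub j) isClosed_Icc
    exact ⟨h1 ⟨le_refl _, (hab j).1.le⟩, h1 ⟨(hab j).1.le, le_refl _⟩⟩
  have hanotU : ∀ j k, a j ∉ Set.Ioo (a k) (b k) := by
    intro j k hmem
    rcases eq_or_ne j k with rfl | hjk
    · exact lt_irrefl _ hmem.1
    · set y := (a j + min (b j) (b k)) / 2 with hy
      have h1 : a j < min (b j) (b k) := lt_min (hab j).1 hmem.2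
      have hyj : y ∈ Set.Ioo (a j) (b j) := by
        constructor
        · simp only [hy]; linarith [min_le_left (b j) (b k), min_le_right (b j) (b k)]
        · simp only [hy]; linarith [min_le_left (b j) (b k)]
      have hyk : y ∈ Set.Ioo (a k) (b k) := by
        constructor
        · simp only [hy]; linarith [hmem.1, min_le_right (b j) (b k)]
        · simp only [hy]; linarith [min_le_right (b j) (b k)]
      exact Set.disjoint_left.1 (hdisj hjk) hyj hyk
  have hbnotU : ∀ j k, b j ∉ Set.Ioo (a k) (b k) := by
    intro j k hmem
    rcases eq_or_ne j k with rfl | hjk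
    · exact lt_irrefl _ hmem.2
    · set y := (max (a j) (a k) + b j) / 2 with hy
      have h1 : max (a j) (a k) < b j := max_lt (hab j).1 hmem.1
      have hyj : y ∈ Set.Ioo (a j) (b j) := by
        constructor
        · simp only [hy]; linarith [le_max_left (a j) (a k)]
        · simp only [hy]; linarith [le_max_left (a j) (a k), le_max_right (a j) (a k)]
      have hyk : y ∈ Set.Ioo (a k) (b k) := by
        constructor
        · simp only [hy]; linarith [le_max_right (a j) (a k)]
        · simp only [hy]; linarith [hmem.2, le_max_right (a j) (a k)]
      exact Set.disjoint_left.1 (hdisj hjk) hyj hyk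
  have haF : ∀ j, a j ∈ F ∧ b j ∈ F := by
    intro j
    constructor
    · by_contra h
      have : a j ∈ Set.Icc m M \ F := ⟨(habIcc j).1, h⟩
      rw [hcompl] at this
      obtain ⟨k, hk⟩ := Set.mem_iUnion.1 this
      exact hanotU j k hk
    · by_contra h
      have : b j ∈ Set.Icc m M \ F := ⟨(habIcc j).2, h⟩
      rw [hcompl] at this
      obtain ⟨k, hk⟩ := Set.mem_iUnion.1 this
      exact hbnotU j k hk
  have hainj : ∀ j k, a j = a k → j = k := by
    intro j k hjk
    by_contra hne
    set y := (a j + min (b j) (b k)) / 2 with hy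
    have h1 : a j < min (b j) (b k) := lt_min (hab j).1 (hjk ▸ (hab k).1)
    have hyj : y ∈ Set.Ioo (a j) (b j) := by
      constructor
      · simp only [hy]; linarith [min_le_left (b j) (b k), min_le_right (b j) (b k)]
      · simp only [hy]; linarith [min_le_left (b j) (b k)]
    have hyk : y ∈ Set.Ioo (a k) (b k) := by
      constructor
      · simp only [hy]; rw [← hjk]; linarith [min_le_right (b j) (b k)]
      · simp only [hy]; linarith [min_le_right (b j) (b k)]
    exact Set.disjoint_left.1 (hdisj hne) hyj hyk
  -- infDist inside a complementary interval
  have hinfIoo : ∀ j, ∀ x ∈ Set.Ioo (a j) (b j),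
      Metric.infDist x F = min (x - a j) (b j - x) := by
    intro j x hx
    apply le_antisymm
    · rcases le_total (x - a j) (b j - x) with h | h
      · rw [min_eq_left h]
        calc Metric.infDist x F ≤ dist x (a j) := Metric.infDist_le_dist_of_mem (haF j).1
          _ = x - a j := by rw [Real.dist_eq, abs_of_pos (by linarith [hx.1])]
      · rw [min_eq_right h]
        calc Metric.infDist x F ≤ dist x (b j) := Metric.infDist_le_dist_of_mem (haF j).2
          _ = b j - x := by
              rw [Real.dist_eq, abs_of_neg (by linarith [hx.2])]; ring
    · apply aux_le_infDist hFne
      intro y hy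
      rcases hsep j y hy with h | h
      · have h1 : x - y ≤ |x - y| := le_abs_self _
        rw [Real.dist_eq]
        calc min (x - a j) (b j - x) ≤ x - a j := min_le_left _ _
          _ ≤ |x - y| := by linarith
      · have h1 : -(x - y) ≤ |x - y| := neg_le_abs _
        rw [Real.dist_eq]
        calc min (x - a j) (b j - x) ≤ b j - x := min_le_right _ _
          _ ≤ |x - y| := by linarith
  -- frontier membership for deep intervals
  have hfrontier_mem : ∀ r : ℝ, 0 < r → ∀ j, 2*r < l j →
      a j + r ∈ frontier (Metric.cthickening r F) := by
    intro r hr j hlj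
    have hlen : b j - a j = l j := (hab j).2
    rw [(Metric.isClosed_cthickening).frontier_eq, Set.mem_diff]
    constructor
    · rw [aux_mem_cthickening_iff hFne hr.le]
      calc Metric.infDist (a j + r) F ≤ dist (a j + r) (a j) :=
            Metric.infDist_le_dist_of_mem (haF j).1
        _ = r := by rw [Real.dist_eq, add_sub_cancel_left, abs_of_pos hr]
    · intro hint
      obtain ⟨ε, hε, hball⟩ := Metric.mem_nhds_iff.1 (mem_interior_iff_mem_nhds.1 hint)
      set δ := min (ε/2) ((l j - 2*r)/2) with hδdef
      have hδ : 0 < δ := lt_min (by linarith) (by linarith)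
      have hδ1 : δ ≤ ε/2 := min_le_left _ _
      have hδ2 : δ ≤ (l j - 2*r)/2 := min_le_right _ _
      set x' := a j + r + δ with hx'def
      have hx'mem : x' ∈ Metric.ball (a j + r) ε := by
        rw [Metric.mem_ball, Real.dist_eq, add_sub_cancel_left, abs_of_pos hδ]; linarith
      have hx'c := hball hx'mem
      rw [aux_mem_cthickening_iff hFne hr.le] at hx'c
      have hx'Ioo : x' ∈ Set.Ioo (a j) (b j) := ⟨by simp only [hx'def]; linarith,
        by simp only [hx'def]; linarith⟩
      rw [hinfIoo j x' hx'Ioo] at hx'c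
      have h1 : x' - a j = r + δ := by simp only [hx'def]; ring
      have h2 : b j - x' = l j - r - δ := by simp only [hx'def]; linarith
      rw [h1, h2] at hx'c
      have : min (r + δ) (l j - r - δ) > r := lt_min (by linarith) (by linarith)
      linarith
  -- frontier points lie in an explicit set
  have hlevel : ∀ r : ℝ, 0 < r → ∀ x ∈ frontier (Metric.cthickening r F),
      x = m - r ∨ x = M + r ∨ ∃ j, 2*r ≤ l j ∧ (x = a j + r ∨ x = b j - r) := by
    intro r hr x hx
    have hinf : Metric.infDist x F = r := by
      have h1 := Metric.frontier_cthickening_subset F hx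
      simp only [Set.mem_setOf_eq] at h1
      rw [Metric.infDist, h1, ENNReal.toReal_ofReal hr.le]
    have hxF : x ∉ F := fun h => by
      rw [Metric.infDist_zero_of_mem h] at hinf; linarith
    rcases lt_or_ge x m with hxm | hxm
    · left
      have h1 : Metric.infDist x F ≤ m - x := by
        calc Metric.infDist x F ≤ dist x m := Metric.infDist_le_dist_of_mem hm
          _ = m - x := by rw [Real.dist_eq, abs_of_neg (by linarith)]; ring
      have h2 : m - x ≤ Metric.infDist x F := by
        apply aux_le_infDist hFne
        intro y hy
        have : m ≤ y := (hFsub hy).1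
        rw [Real.dist_eq]
        have := neg_le_abs (x - y)
        linarith
      linarith
    rcases lt_or_ge M x with hxM | hxM
    · right; left
      have h1 : Metric.infDist x F ≤ x - M := by
        calc Metric.infDist x F ≤ dist x M := Metric.infDist_le_dist_of_mem hM
          _ = x - M := by rw [Real.dist_eq, abs_of_pos (by linarith)]
      have h2 : x - M ≤ Metric.infDist x F := by
        apply aux_le_infDist hFne
        intro y hy
        have : y ≤ M := (hFsub hy).2
        rw [Real.dist_eq]
        have := le_abs_self (x - y)
        linarith
      linarith
    · right; right
      have hxIcc : x ∈ Set.Icc m M \ F := ⟨⟨hxm, hxM⟩, hxF⟩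
      rw [hcompl] at hxIcc
      obtain ⟨j, hj⟩ := Set.mem_iUnion.1 hxIcc
      refine ⟨j, ?_, ?_⟩
      · have := hinfIoo j x hj
        rw [hinf] at this
        have hlen : b j - a j = l j := (hab j).2
        rcases le_total (x - a j) (b j - x) with h | h
        · rw [min_eq_left h] at this; linarith
        · rw [min_eq_right h] at this; linarith
      · have := hinfIoo j x hj
        rw [hinf] at this
        rcases le_total (x - a j) (b j - x) with h | h
        · left; rw [min_eq_left h] at this; linarith
        · right; rw [min_eq_right h] at this; linarith
  -- measure lower bound via injective frontier points
  have hmeas_lower : ∀ r : ℝ, 0 < r → ∀ n : ℕ, (∀ j, N ≤ j → j < n → 2*r < l j) →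
      ((n - N : ℕ) : ℝ≥0∞) ≤ μH[(0:ℝ)] (frontier (Metric.cthickening r F)) := by
    intro r hr n hn
    set T := (Finset.Ico N n).image (fun j => a j + r) with hT
    have hcard : T.card = n - N := by
      rw [hT, Finset.card_image_of_injOn, Nat.card_Ico]
      intro j _ k _ hjk
      simp only at hjk
      exact hainj j k (by linarith)
    have hsub : (↑T : Set ℝ) ⊆ frontier (Metric.cthickening r F) := by
      intro x hxT
      simp only [hT, Finset.coe_image, Set.mem_image, Finset.mem_coe, Finset.mem_Ico] at hxT
      obtain ⟨j, ⟨hj1, hj2⟩, rfl⟩ := hxT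
      exact hfrontier_mem r hr j (hn j hj1 hj2)
    calc ((n - N : ℕ) : ℝ≥0∞) = (T.card : ℝ≥0∞) := by rw [hcard]
      _ = μH[(0:ℝ)] (↑T : Set ℝ) := (aux_hausdorff0_finset T).symm
      _ ≤ _ := measure_mono hsub
  -- measure upper bound via the level set
  have hmeas_upper : ∀ r : ℝ, 0 < r → ∀ n : ℕ, (∀ j, 2*r ≤ l j → j < n) →
      μH[(0:ℝ)] (frontier (Metric.cthickening r F)) ≤ ((2 + 2*n : ℕ) : ℝ≥0∞) := by
    intro r hr n hn
    set S : Finset ℝ := ({m - r, M + r} : Finset ℝ) ∪ (Finset.range n).image (fun j => a j + r)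
        ∪ (Finset.range n).image (fun j => b j - r) with hS
    have hsub : frontier (Metric.cthickening r F) ⊆ (↑S : Set ℝ) := by
      intro x hx
      have hmem : ∀ z : ℝ, z ∈ S ↔ (z = m - r ∨ z = M + r) ∨
          (∃ j < n, a j + r = z) ∨ (∃ j < n, b j - r = z) := by
        intro z
        simp [hS, Finset.mem_union, Finset.mem_image, Finset.mem_insert, Finset.mem_singleton,
          Finset.mem_range, or_assoc]
      rcases hlevel r hr x hx with h | h | ⟨j, hj, h | h⟩
      · exact Finset.mem_coe.2 ((hmem x).2 (Or.inl (Or.inl h)))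
      · exact Finset.mem_coe.2 ((hmem x).2 (Or.inl (Or.inr h)))
      · exact Finset.mem_coe.2 ((hmem x).2 (Or.inr (Or.inl ⟨j, hn j hj, h.symm⟩)))
      · exact Finset.mem_coe.2 ((hmem x).2 (Or.inr (Or.inr ⟨j, hn j hj, h.symm⟩)))
    have hcard : S.card ≤ 2 + 2*n := by
      have h1 := Finset.card_union_le (({m - r, M + r} : Finset ℝ) ∪
        (Finset.range n).image (fun j => a j + r)) ((Finset.range n).image (fun j => b j - r))
      have h2 := Finset.card_union_le ({m - r, M + r} : Finset ℝ)
        ((Finset.range n).image (fun j => a j + r))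
      have h3 := Finset.card_image_le (s := Finset.range n) (f := fun j => a j + r)
      have h4 := Finset.card_image_le (s := Finset.range n) (f := fun j => b j - r)
      have h5 : ({m - r, M + r} : Finset ℝ).card ≤ 2 :=
        (Finset.card_insert_le _ _).trans (by simp)
      simp only [Finset.card_range] at h3 h4
      rw [hS]
      omega
    calc μH[(0:ℝ)] (frontier (Metric.cthickening r F)) ≤ μH[(0:ℝ)] (↑S : Set ℝ) :=
        measure_mono hsub
      _ = (S.card : ℝ≥0∞) := aux_hausdorff0_finset S
      _ ≤ ((2 + 2*n : ℕ) : ℝ≥0∞) := Nat.cast_le.2 hcard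
  -- analytic estimates from the string bounds
  have hD0' : (0:ℝ) < 1/D := by positivity
  have hjp : ∀ j : ℕ, N ≤ j → (0:ℝ) < (j:ℝ) ^ (1/D) := by
    intro j hj
    have hj0 : (0:ℝ) < (j:ℝ) := by
      have : 1 ≤ j := le_trans hN1 hj
      exact_mod_cast this
    positivity
  have key1 : ∀ r : ℝ, 0 < r → ∀ j, N ≤ j → (j:ℝ) < (c₁/(2*r)) ^ D → 2*r < l j := by
    intro r hr j hjN hjX
    have hX : (0:ℝ) < c₁/(2*r) := by positivity
    have hp : (j:ℝ) ^ (1/D) < c₁/(2*r) := by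
      have h0 : ((j:ℝ)) ^ (1/D) < ((c₁/(2*r)) ^ D) ^ (1/D) :=
        Real.rpow_lt_rpow (Nat.cast_nonneg j) hjX hD0'
      rwa [← Real.rpow_mul hX.le, mul_one_div, div_self (ne_of_gt hD0), Real.rpow_one] at h0
    have hppos := hjp j hjN
    have h2 : (j:ℝ) ^ (1/D) * (2*r) < c₁ := (lt_div_iff₀ (by linarith)).1 hp
    have h3 := (hNbound j hjN).1
    nlinarith
  have key2 : ∀ r : ℝ, 0 < r → ∀ j, N ≤ j → 2*r ≤ l j → (j:ℝ) ≤ (c₂/(2*r)) ^ D := by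
    intro r hr j hjN hlj
    have hppos := hjp j hjN
    have h3 := (hNbound j hjN).2
    have hp : (j:ℝ) ^ (1/D) ≤ c₂/(2*r) := by
      rw [le_div_iff₀ (by linarith : (0:ℝ) < 2*r)]
      nlinarith
    calc (j:ℝ) = ((j:ℝ) ^ (1/D)) ^ D := by
          rw [← Real.rpow_mul (Nat.cast_nonneg j), one_div_mul_cancel (ne_of_gt hD0),
            Real.rpow_one]
      _ ≤ (c₂/(2*r)) ^ D := Real.rpow_le_rpow hppos.le hp hD0.le
  have hXr : ∀ c : ℝ, 0 < c → ∀ r : ℝ, 0 < r → (c/(2*r)) ^ D = (c/2) ^ D * r ^ (-D) := by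
    intro c hc r hr
    have h1 : c/(2*r) = (c/2) * r⁻¹ := by field_simp
    rw [h1, Real.mul_rpow (by positivity) (by positivity), Real.inv_rpow hr.le,
      ← Real.rpow_neg hr.le]
  set K := (1 - D) * kappa (1 - D) with hKdef
  have hkappa : 0 < kappa (1 - D) := by
    unfold kappa
    apply div_pos
    · exact Real.rpow_pos_of_pos Real.pi_pos _
    · exact Real.Gamma_pos_of_pos (by linarith)
  have hKpos : 0 < K := mul_pos (by linarith) hkappa
  have hA1 : (0:ℝ) < (c₁/2) ^ D := Real.rpow_pos_of_pos (by positivity) _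
  have hA2 : (0:ℝ) < (c₂/2) ^ D := Real.rpow_pos_of_pos (by positivity) _
  constructor
  · -- lower S-content is positive
    unfold lowerSContent
    simp only [← hKdef]
    have htend : Tendsto (fun r : ℝ => (c₁/(2*r)) ^ D) (𝓝[>] (0:ℝ)) atTop := by
      apply (tendsto_rpow_atTop hD0).comp
      have h1 : Tendsto (fun r : ℝ => r⁻¹) (𝓝[>] (0:ℝ)) atTop := tendsto_inv_nhdsGT_zero
      have h2 : Tendsto (fun r : ℝ => (c₁/2) * r⁻¹) (𝓝[>] (0:ℝ)) atTop :=
        h1.const_mul_atTop (by positivity)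
      refine h2.congr (fun r => ?_)
      rw [← div_div]
      ring
    have hev1 : ∀ᶠ r : ℝ in 𝓝[>] (0:ℝ), 2*((N:ℝ)+1) ≤ (c₁/(2*r)) ^ D :=
      htend.eventually_ge_atTop _
    have hmain : ∀ᶠ r : ℝ in 𝓝[>] (0:ℝ),
        ENNReal.ofReal ((c₁/2)^D / (2*K)) ≤
          μH[(0:ℝ)] (frontier (cthickening r F)) / ENNReal.ofReal (K * r ^ (-D)) := by
      filter_upwards [hev1, eventually_mem_nhdsWithin] with r hX hr
      rw [Set.mem_Ioi] at hr
      set x := (c₁/(2*r)) ^ D with hxdef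
      have hxpos : 0 < x := Real.rpow_pos_of_pos (by positivity) _
      set n := ⌊x⌋₊ with hndef
      have hnN : N ≤ n := Nat.le_floor (by push_cast; linarith)
      have hnx : (n:ℝ) ≤ x := Nat.floor_le hxpos.le
      have hxn : x < n + 1 := Nat.lt_floor_add_one x
      have hcast : ((n - N : ℕ):ℝ) = (n:ℝ) - (N:ℝ) := by
        rw [Nat.cast_sub hnN]
      have hμ : ENNReal.ofReal (x/2) ≤ μH[(0:ℝ)] (frontier (cthickening r F)) := by
        refine le_trans ?_ (hmeas_lower r hr n ?_)
        · rw [← ENNReal.ofReal_natCast (n - N)]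
          apply ENNReal.ofReal_le_ofReal
          rw [hcast]
          linarith
        · intro j hj1 hj2
          apply key1 r hr j hj1
          calc ((j:ℝ)) < (n:ℝ) := by exact_mod_cast hj2
            _ ≤ x := hnx
      have hrD : (0:ℝ) < r ^ (-D) := Real.rpow_pos_of_pos hr _
      have hdne : ENNReal.ofReal (K * r ^ (-D)) ≠ 0 := by
        rw [Ne, ENNReal.ofReal_eq_zero, not_le]
        positivity
      rw [ENNReal.le_div_iff_mul_le (Or.inl hdne) (Or.inl ENNReal.ofReal_ne_top)]
      rw [← ENNReal.ofReal_mul (by positivity)]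
      refine le_trans (ENNReal.ofReal_le_ofReal ?_) hμ
      have hxr : x = (c₁/2)^D * r ^ (-D) := hXr c₁ hc₁ r hr
      have heq : (c₁/2)^D / (2*K) * (K * r ^ (-D)) = (c₁/2)^D * r ^ (-D) / 2 := by
        field_simp
      rw [heq, hxr]
    refine lt_of_lt_of_le ?_ (Filter.le_liminf_of_le (by isBoundedDefault) hmain)
    rw [ENNReal.ofReal_pos]
    positivity
  · -- upper S-content is finite
    unfold upperSContent
    simp only [← hKdef]
    set B := 2*(N:ℝ) + 4 + 2*(c₂/2)^D with hBdef
    have hmain : ∀ᶠ r : ℝ in 𝓝[>] (0:ℝ),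
        μH[(0:ℝ)] (frontier (cthickening r F)) / ENNReal.ofReal (K * r ^ (-D))
          ≤ ENNReal.ofReal (B / K) := by
      have hIoo : Set.Ioo (0:ℝ) 1 ∈ 𝓝[>] (0:ℝ) := Ioo_mem_nhdsGT_of_mem ⟨le_refl 0, one_pos⟩
      filter_upwards [hIoo] with r hr
      obtain ⟨hr0, hr1⟩ := hr
      set y := (c₂/(2*r)) ^ D with hydef
      have hypos : 0 < y := Real.rpow_pos_of_pos (by positivity) _
      set n := N + ⌊y⌋₊ + 1 with hndef
      have hcount : ∀ j, 2*r ≤ l j → j < n := by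
        intro j hj
        rcases lt_or_ge j N with h | h
        · omega
        · have h1 := key2 r hr0 j h hj
          have h2 : j ≤ ⌊y⌋₊ := Nat.le_floor h1
          omega
      have hμ := hmeas_upper r hr0 n hcount
      have hrD : (0:ℝ) < r ^ (-D) := Real.rpow_pos_of_pos hr0 _
      have hrD1 : (1:ℝ) ≤ r ^ (-D) := by
        rw [Real.rpow_neg hr0.le]
        exact one_le_inv₀ (Real.rpow_pos_of_pos hr0 _) |>.mpr (Real.rpow_le_one hr0.le hr1.le hD0.le)
      have hcard_real : ((2 + 2*n : ℕ):ℝ) ≤ B * r ^ (-D) := by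
        push_cast [hndef]
        have hfl : (⌊y⌋₊:ℝ) ≤ y := Nat.floor_le hypos.le
        have hyr : y = (c₂/2)^D * r ^ (-D) := hXr c₂ hc₂ r hr0
        have hfl' : (⌊y⌋₊:ℝ) ≤ (c₂/2)^D * r ^ (-D) := by rw [← hyr]; exact hfl
        rw [hBdef]
        nlinarith [mul_nonneg (show (0:ℝ) ≤ 2*(N:ℝ) + 4 by positivity)
          (show (0:ℝ) ≤ r ^ (-D) - 1 by linarith)]
      have hd_pos : (0:ℝ) < K * r ^ (-D) := by positivity
      calc μH[(0:ℝ)] (frontier (cthickening r F)) / ENNReal.ofReal (K * r ^ (-D))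
          ≤ ENNReal.ofReal (B * r ^ (-D)) / ENNReal.ofReal (K * r ^ (-D)) := by
            apply ENNReal.div_le_div _ le_rfl
            refine hμ.trans ?_
            rw [← ENNReal.ofReal_natCast]
            exact ENNReal.ofReal_le_ofReal hcard_real
        _ = ENNReal.ofReal ((B * r ^ (-D)) / (K * r ^ (-D))) :=
            (ENNReal.ofReal_div_of_pos hd_pos).symm
        _ = ENNReal.ofReal (B / K) := by
            congr 1
            rw [mul_div_mul_right _ _ (ne_of_gt hrD)]
    exact lt_of_le_of_lt (Filter.limsup_le_of_le (by isBoundedDefault) hmain)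
      ENNReal.ofReal_lt_top
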